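/- Let A and B be positive definite p×p real matrices with A ⪯ B (i.e., B − A is positive semidefinite). Then for any vector x ∈ ℝ^p, xᵀ A⁻¹ x ≤ (det B / det A) · xᵀ B⁻¹ x. -/

import Mathlib

open Matrix

lemma eig_ge_one {n : Type*} [Fintype n] [DecidableEq n] {N : Matrix n n ℝ} (hN : N.IsHermitian)
    (h1 : (N - 1).PosSemidef) (i : n) : 1 ≤ hN.eigenvalues i := by
  set v : n → ℝ := ⇑(hN.eigenvectorBasis i) with hv
  have h0 := h1.dotProduct_mulVec_nonneg v
  have hMv : N *ᵥ v = hN.eigenvalues i • v := hN.mulVec_eigenvectorBasis i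
  have hvv : v ⬝ᵥ v = 1 := by
    have := hN.eigenvectorBasis.orthonormal.1 i
    have h2 : (inner ℝ (hN.eigenvectorBasis i) (hN.eigenvectorBasis i) : ℝ) = 1 := by
      rw [inner_self_eq_norm_sq_to_K, this]; norm_num
    rw [← h2, EuclideanSpace.inner_eq_star_dotProduct]
    simp [dotProduct, mul_comm]
    rfl
  rw [sub_mulVec, dotProduct_sub, one_mulVec, hMv, dotProduct_smul] at h0
  simp only [star_trivial, smul_eq_mul, hvv, mul_one] at h0
  linarith

lemma vecMul_eq_star_mulVec {n : Type*} [Fintype n] (U : Matrix n n ℝ) (z : n → ℝ) :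
    z ᵥ* U = star U *ᵥ z := by
  ext j; simp [vecMul, mulVec, dotProduct, conjTranspose, mul_comm]

lemma quad_conj {n : Type*} [Fintype n] (U D : Matrix n n ℝ) (z : n → ℝ) :
    z ⬝ᵥ (U * D * star U) *ᵥ z
      = (star U *ᵥ z) ⬝ᵥ D *ᵥ (star U *ᵥ z) := by
  rw [← mulVec_mulVec, ← mulVec_mulVec, dotProduct_mulVec, vecMul_eq_star_mulVec]

lemma key2 {n : Type*} [Fintype n] [DecidableEq n] {N : Matrix n n ℝ} (hN : N.IsHermitian)
    (h1 : (N - 1).PosSemidef) (z : n → ℝ) :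
    z ⬝ᵥ z ≤ N.det * (z ⬝ᵥ N⁻¹.mulVec z) := by
  set l := hN.eigenvalues with hl
  have hl1 : ∀ i, 1 ≤ l i := eig_ge_one hN h1
  have hl0 : ∀ i, (0:ℝ) < l i := fun i => lt_of_lt_of_le one_pos (hl1 i)
  set U : Matrix n n ℝ := (hN.eigenvectorUnitary : Matrix n n ℝ) with hU
  have hU1 : star U * U = 1 := (Matrix.mem_unitaryGroup_iff').mp hN.eigenvectorUnitary.2
  have hU2 : U * star U = 1 := (Matrix.mem_unitaryGroup_iff).mp hN.eigenvectorUnitary.2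
  have hcoe : (RCLike.ofReal ∘ l : n → ℝ) = l := by funext i; simp
  have hspec : N = U * diagonal l * star U := by
    have := hN.spectral_theorem
    rwa [hcoe] at this
  have hdet : N.det = ∏ i, l i := by
    have := hN.det_eq_prod_eigenvalues
    simpa using this
  have hNinv : N⁻¹ = U * diagonal (fun i => (l i)⁻¹) * star U := by
    apply inv_eq_right_inv
    rw [hspec]
    calc U * diagonal l * star U * (U * diagonal (fun i => (l i)⁻¹) * star U)
        = U * (diagonal l * ((star U * U) * diagonal (fun i => (l i)⁻¹))) * star U := by
          simp only [Matrix.mul_assoc]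
      _ = 1 := by
          rw [hU1, Matrix.one_mul, diagonal_mul_diagonal]
          have : (fun i => l i * (l i)⁻¹) = fun _ : n => (1:ℝ) := by
            funext i; exact mul_inv_cancel₀ (hl0 i).ne'
          rw [this, diagonal_one, Matrix.mul_one, hU2]
  set w : n → ℝ := star U *ᵥ z with hw
  have hzz : z ⬝ᵥ z = w ⬝ᵥ w := by
    rw [hw]
    nth_rewrite 1 [← vecMul_eq_star_mulVec]
    rw [← dotProduct_mulVec, mulVec_mulVec, hU2, one_mulVec]
  have hquad : z ⬝ᵥ N⁻¹.mulVec z = ∑ i, (l i)⁻¹ * (w i * w i) := by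
    rw [hNinv, quad_conj, ← hw]
    simp only [dotProduct, mulVec_diagonal]
    exact Finset.sum_congr rfl (fun i _ => by ring)
  rw [hzz, hquad, hdet, Finset.mul_sum]
  apply Finset.sum_le_sum
  intro i _
  have hle : l i ≤ ∏ j, l j := by
    rw [← Finset.mul_prod_erase _ l (Finset.mem_univ i)]
    refine le_mul_of_one_le_right (hl0 i).le ?_
    calc (1:ℝ) = ∏ _j ∈ Finset.univ.erase i, (1:ℝ) := by simp
      _ ≤ ∏ j ∈ Finset.univ.erase i, l j :=
          Finset.prod_le_prod (fun j _ => zero_le_one) (fun j _ => hl1 j)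
  have h2 : (1:ℝ) ≤ (∏ j, l j) * (l i)⁻¹ := by
    rw [← div_eq_mul_inv, le_div_iff₀ (hl0 i)]
    simpa using hle
  have hwnn : 0 ≤ w i * w i := mul_self_nonneg _
  calc w i * w i = 1 * (w i * w i) := (one_mul _).symm
    _ ≤ ((∏ j, l j) * (l i)⁻¹) * (w i * w i) := by
        exact mul_le_mul_of_nonneg_right h2 hwnn
    _ = (∏ j, l j) * ((l i)⁻¹ * (w i * w i)) := by ring

theorem stmt_2 {p : ℕ} (A B : Matrix (Fin p) (Fin p) ℝ)
    (hA : A.PosDef) (hB : B.PosDef) (hAB : (B - A).PosSemidef)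
    (x : Fin p → ℝ) :
    x ⬝ᵥ A⁻¹.mulVec x ≤ (B.det / A.det) * (x ⬝ᵥ B⁻¹.mulVec x) := by
  open scoped MatrixOrder in
  set T : Matrix (Fin p) (Fin p) ℝ := CFC.sqrt A with hTdef
  open scoped MatrixOrder in
  have hTT : T * T = A := CFC.sqrt_mul_sqrt_self A hA.posSemidef.nonneg
  open scoped MatrixOrder in
  have hTh : T.IsHermitian := (nonneg_iff_posSemidef.mp (CFC.sqrt_nonneg A)).1
  have hdA : (0:ℝ) < A.det := hA.det_pos
  have hdT : T.det ≠ 0 := by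
    intro h
    rw [← hTT, det_mul, h, mul_zero] at hdA
    exact lt_irrefl _ hdA
  have hTstar : star T⁻¹ = T⁻¹ := hTh.inv
  have hT1 : T * T⁻¹ = 1 := mul_nonsing_inv T (isUnit_iff_ne_zero.mpr hdT)
  have hT2 : T⁻¹ * T = 1 := nonsing_inv_mul T (isUnit_iff_ne_zero.mpr hdT)
  set N : Matrix (Fin p) (Fin p) ℝ := T⁻¹ * B * T⁻¹ with hNdef
  have hNherm : N.IsHermitian := by
    have := isHermitian_conjTranspose_mul_mul T⁻¹ hB.1
    rwa [show (T⁻¹)ᴴ = star T⁻¹ from rfl, hTstar] at this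
  have hTAT : T⁻¹ * A * T⁻¹ = 1 := by
    rw [← hTT, show T⁻¹ * (T * T) * T⁻¹ = (T⁻¹ * T) * (T * T⁻¹) by
      simp only [Matrix.mul_assoc], hT2, hT1, Matrix.one_mul]
  have hN1 : (N - 1).PosSemidef := by
    have h := hAB.mul_mul_conjTranspose_same T⁻¹
    rwa [show (T⁻¹)ᴴ = star T⁻¹ from rfl, hTstar, Matrix.mul_sub, Matrix.sub_mul,
      hTAT, ← hNdef] at h
  have hdetN : N.det = B.det / A.det := by
    rw [hNdef, det_mul, det_mul, det_nonsing_inv, ← hTT, det_mul]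
    rw [Ring.inverse_eq_inv]
    field_simp [hdT]
  have hAinv : A⁻¹ = T⁻¹ * T⁻¹ := by rw [← hTT, Matrix.mul_inv_rev]
  have hBeq : B = T * N * T := by
    rw [hNdef, show T * (T⁻¹ * B * T⁻¹) * T = (T * T⁻¹) * B * (T⁻¹ * T) by
      simp only [Matrix.mul_assoc], hT1, hT2, Matrix.one_mul, Matrix.mul_one]
  have hBinv : B⁻¹ = T⁻¹ * N⁻¹ * T⁻¹ := by
    rw [hBeq, Matrix.mul_inv_rev, Matrix.mul_inv_rev]
    simp only [Matrix.mul_assoc]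
  set z : Fin p → ℝ := T⁻¹ *ᵥ x with hz
  have hLHS : x ⬝ᵥ A⁻¹.mulVec x = z ⬝ᵥ z := by
    rw [hAinv, ← mulVec_mulVec, dotProduct_mulVec, vecMul_eq_star_mulVec, hTstar, ← hz]
  have hRHS : x ⬝ᵥ B⁻¹.mulVec x = z ⬝ᵥ N⁻¹.mulVec z := by
    rw [hBinv, show T⁻¹ * N⁻¹ * T⁻¹ = T⁻¹ * N⁻¹ * star T⁻¹ by rw [hTstar],
      quad_conj, hTstar, ← hz]
  rw [hLHS, hRHS, ← hdetN]
  exact key2 hNherm hN1 z
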